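/- Let ε ∈ (0,1) and let C, Y₁, Y₂, R be mutually independent random variables, where C is Bernoulli with P(C = 1) = p ∈ [0,1], P(Y₁ < 1) = 1, P(Y₂ ≥ 1) = 1, and R is uniform on [1−ε, 1+ε]. Set Y′ = C·Y₁ + (1−C)·Y₂. Then E[1{RY′ ≤ 1+ε}] = p + (1−p)·E[1{Y₂ ∈ I₂}·((1+ε)/Y₂ − (1−ε))/(2ε)], where I₂ = [1, (1+ε)/(1−ε)]. -/

import Mathlib

open MeasureTheory ProbabilityTheory Real

/-- The uniform probability measure on the interval `[a, b]`. -/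
noncomputable def uniformIcc (a b : ℝ) : Measure ℝ :=
  (ENNReal.ofReal (b - a))⁻¹ • (MeasureTheory.volume.restrict (Set.Icc a b))

/-- The median of `2*n+1` real values: their `(n+1)`-st smallest value. -/
noncomputable def medianOf {n : ℕ} (v : Fin (2 * n + 1) → ℝ) : ℝ :=
  (Multiset.sort (↑(List.ofFn v)) (· ≤ ·)).get ⟨n, by simp; omega⟩

/-- The nuisance factor `f(ε) = (1+ε)/((1-ε)² (1+ε-ε²))`. -/
noncomputable def nuisance (ε : ℝ) : ℝ := (1 + ε) / ((1 - ε) ^ 2 * (1 + ε - ε ^ 2))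

lemma uniformIcc_apply (a b : ℝ) (s : Set ℝ) (hs : MeasurableSet s) :
    uniformIcc a b s = (ENNReal.ofReal (b - a))⁻¹ * volume (s ∩ Set.Icc a b) := by
  simp [uniformIcc, Measure.restrict_apply hs]

lemma uniformIcc_isProb (a b : ℝ) (hab : a < b) : IsProbabilityMeasure (uniformIcc a b) := by
  constructor
  rw [uniformIcc_apply a b _ MeasurableSet.univ]
  rw [Set.univ_inter, Real.volume_Icc]
  rw [ENNReal.inv_mul_cancel] <;> simp [ne_of_gt (sub_pos.2 hab)]
  linarith

lemma uniformIcc_Iic_of_mem (a b t : ℝ) (hab : a < b) (hta : a ≤ t) (htb : t ≤ b) :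
    uniformIcc a b (Set.Iic t) = ENNReal.ofReal ((t - a) / (b - a)) := by
  rw [uniformIcc_apply a b _ measurableSet_Iic]
  have : Set.Iic t ∩ Set.Icc a b = Set.Icc a t := by
    ext x; simp [Set.mem_Icc, Set.mem_Iic]
    constructor
    · rintro ⟨h1, h2, h3⟩; exact ⟨h2, h1⟩
    · rintro ⟨h1, h2⟩; exact ⟨h2, h1, h2.trans htb⟩
  rw [this, Real.volume_Icc, ENNReal.ofReal_div_of_pos (by linarith),
    ENNReal.div_eq_inv_mul]

lemma uniformIcc_Iic_of_lt (a b t : ℝ) (ht : t < a) :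
    uniformIcc a b (Set.Iic t) = 0 := by
  rw [uniformIcc_apply a b _ measurableSet_Iic]
  have : Set.Iic t ∩ Set.Icc a b = ∅ := by
    ext x; simp only [Set.mem_inter_iff, Set.mem_Iic, Set.mem_Icc, Set.mem_empty_iff_false,
      iff_false]
    rintro ⟨h1, h2, h3⟩; linarith
  simp [this]

lemma inner_integral (ε y : ℝ) (hε : ε ∈ Set.Ioo (0:ℝ) 1) (hy : 1 ≤ y) :
    ∫ r, (if r * y ≤ 1 + ε then (1:ℝ) else 0) ∂(uniformIcc (1 - ε) (1 + ε)) =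
      if y ∈ Set.Icc (1:ℝ) ((1 + ε) / (1 - ε)) then ((1 + ε) / y - (1 - ε)) / (2 * ε) else 0 := by
  obtain ⟨hε0, hε1⟩ := hε
  have hy0 : (0:ℝ) < y := lt_of_lt_of_le one_pos hy
  have ha : (0:ℝ) < 1 - ε := by linarith
  have hab : 1 - ε < 1 + ε := by linarith
  have hcond : ∀ r : ℝ, (r * y ≤ 1 + ε) ↔ r ∈ Set.Iic ((1 + ε) / y) := by
    intro r; rw [Set.mem_Iic, le_div_iff₀ hy0]
  have : (fun r => if r * y ≤ 1 + ε then (1:ℝ) else 0) =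
      (Set.Iic ((1 + ε) / y)).indicator (fun _ => (1:ℝ)) := by
    ext r; rw [Set.indicator_apply]
    simp only [hcond r]
  rw [this, integral_indicator_const _ measurableSet_Iic, smul_eq_mul, mul_one]
  by_cases hcase : y ≤ (1 + ε) / (1 - ε)
  · have h1 : 1 - ε ≤ (1 + ε) / y := by
      rw [le_div_iff₀ hy0]
      calc (1 - ε) * y ≤ (1 - ε) * ((1 + ε) / (1 - ε)) := by
            apply mul_le_mul_of_nonneg_left hcase (le_of_lt ha)
        _ = 1 + ε := by field_simp
    have h2 : (1 + ε) / y ≤ 1 + ε := by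
      rw [div_le_iff₀ hy0]
      nlinarith
    rw [measureReal_def, uniformIcc_Iic_of_mem _ _ _ hab h1 h2, if_pos ⟨hy, hcase⟩]
    rw [ENNReal.toReal_ofReal (by
      apply div_nonneg (by linarith) (by linarith))]
    ring_nf
  · have h1 : (1 + ε) / y < 1 - ε := by
      rw [div_lt_iff₀ hy0]
      push_neg at hcase
      calc 1 + ε = (1 - ε) * ((1 + ε) / (1 - ε)) := by field_simp
        _ < (1 - ε) * y := by apply mul_lt_mul_of_pos_left hcase ha
    rw [measureReal_def, uniformIcc_Iic_of_lt _ _ _ h1, if_neg (fun h => hcase h.2)]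
    simp

/-- Let `ε ∈ (0,1)` and `C, Y₁, Y₂, R` be mutually independent, with `C`
Bernoulli of parameter `p ∈ [0,1]`, `P(Y₁ < 1) = 1`, `P(Y₂ ≥ 1) = 1`, and `R` uniform on
`[1−ε,1+ε]`.  For `Y′ = C·Y₁ + (1−C)·Y₂`,
`E[1{RY′ ≤ 1+ε}] = p + (1−p)·E[1{Y₂ ∈ I₂}·((1+ε)/Y₂ − (1−ε))/(2ε)]`,
where `I₂ = [1,(1+ε)/(1−ε)]`. -/
theorem expectation_indicator_formula {Ω : Type*} [MeasureSpace Ω]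
    [IsProbabilityMeasure (ℙ : Measure Ω)]
    (ε p : ℝ) (hε : ε ∈ Set.Ioo (0 : ℝ) 1) (hp : p ∈ Set.Icc (0 : ℝ) 1)
    (C Y₁ Y₂ R : Ω → ℝ)
    (hCm : Measurable C) (hY₁m : Measurable Y₁) (hY₂m : Measurable Y₂) (hRm : Measurable R)
    (hindep : iIndepFun ![C, Y₁, Y₂, R] ℙ)
    (hC1 : ℙ {ω | C ω = 1} = ENNReal.ofReal p)
    (hC0 : ℙ {ω | C ω = 0} = ENNReal.ofReal (1 - p))
    (hY₁ : ℙ {ω | Y₁ ω < 1} = 1)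
    (hY₂ : ℙ {ω | 1 ≤ Y₂ ω} = 1)
    (hR : Measure.map R ℙ = uniformIcc (1 - ε) (1 + ε)) :
    ∫ ω, (if R ω * (C ω * Y₁ ω + (1 - C ω) * Y₂ ω) ≤ 1 + ε then (1 : ℝ) else 0) ∂ℙ =
      p + (1 - p) *
        ∫ ω, (if Y₂ ω ∈ Set.Icc (1 : ℝ) ((1 + ε) / (1 - ε)) then
          ((1 + ε) / Y₂ ω - (1 - ε)) / (2 * ε) else 0) ∂ℙ := by
  obtain ⟨hε0, hε1⟩ := hε
  obtain ⟨hp0, hp1⟩ := hp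
  have ha : (0:ℝ) < 1 - ε := by linarith
  have hab : 1 - ε < 1 + ε := by linarith
  -- a.e. facts
  have hY₁ae : ∀ᵐ ω ∂(ℙ : Measure Ω), Y₁ ω < 1 :=
    (mem_ae_iff_prob_eq_one (measurableSet_lt hY₁m measurable_const)).2 hY₁
  have hCae : ∀ᵐ ω ∂(ℙ : Measure Ω), C ω = 0 ∨ C ω = 1 := by
    have hs0 : MeasurableSet {ω | C ω = 0} := hCm (measurableSet_singleton 0)
    have hs1 : MeasurableSet {ω | C ω = 1} := hCm (measurableSet_singleton 1)
    apply (mem_ae_iff_prob_eq_one (hs0.union hs1)).2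
    have hdisj : Disjoint {ω | C ω = 0} {ω | C ω = 1} := by
      rw [Set.disjoint_left]
      rintro ω h0 h1
      simp only [Set.mem_setOf_eq] at h0 h1
      rw [h0] at h1; norm_num at h1
    have hun : {ω | C ω = 0 ∨ C ω = 1} = {ω | C ω = 0} ∪ {ω | C ω = 1} := rfl
    rw [show ({ω | C ω = 0} ∪ {ω | C ω = 1} : Set Ω) = {ω | C ω = 0 ∨ C ω = 1} from rfl,
      hun, measure_union hdisj hs1, hC0, hC1, ← ENNReal.ofReal_add (by linarith) hp0]
    norm_num
  have hRae : ∀ᵐ ω ∂(ℙ : Measure Ω), R ω ∈ Set.Icc (1 - ε) (1 + ε) := by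
    apply (mem_ae_iff_prob_eq_one (hRm measurableSet_Icc)).2
    rw [← Measure.map_apply hRm measurableSet_Icc, hR, uniformIcc_apply _ _ _ measurableSet_Icc, Set.inter_self, Real.volume_Icc]
    rw [ENNReal.inv_mul_cancel] <;> simp [ne_of_gt (sub_pos.2 hab)]
    linarith
  -- rewrite the integrand a.e.
  have hmain : (fun ω => if R ω * (C ω * Y₁ ω + (1 - C ω) * Y₂ ω) ≤ 1 + ε then (1:ℝ) else 0)
      =ᵐ[(ℙ : Measure Ω)] fun ω => (if C ω = 1 then (1:ℝ) else 0) +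
        (if C ω = 0 ∧ R ω * Y₂ ω ≤ 1 + ε then (1:ℝ) else 0) := by
    filter_upwards [hY₁ae, hCae, hRae] with ω h1 hc hr
    obtain ⟨hr1, hr2⟩ := hr
    rcases hc with hc | hc
    · have hY' : C ω * Y₁ ω + (1 - C ω) * Y₂ ω = Y₂ ω := by rw [hc]; ring
      rw [hY', hc]
      norm_num
    · have hY' : C ω * Y₁ ω + (1 - C ω) * Y₂ ω = Y₁ ω := by rw [hc]; ring
      have hRY : R ω * Y₁ ω ≤ 1 + ε := by nlinarith
      rw [hY', if_pos hRY, hc]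
      norm_num
  rw [integral_congr_ae hmain]
  -- integrability of the two pieces
  have hsC1 : MeasurableSet {ω | C ω = 1} := hCm (measurableSet_singleton 1)
  have hsC0 : MeasurableSet {ω | C ω = 0} := hCm (measurableSet_singleton 0)
  have hsBig : MeasurableSet {ω | C ω = 0 ∧ R ω * Y₂ ω ≤ 1 + ε} :=
    (hsC0).inter (measurableSet_le (hRm.mul hY₂m) measurable_const)
  have e1 : (fun ω => if C ω = 1 then (1:ℝ) else 0) =
      Set.indicator {ω | C ω = 1} (fun _ => (1:ℝ)) := by
    ext ω; rw [Set.indicator_apply]; rfl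
  have e2 : (fun ω => if C ω = 0 ∧ R ω * Y₂ ω ≤ 1 + ε then (1:ℝ) else 0) =
      Set.indicator {ω | C ω = 0 ∧ R ω * Y₂ ω ≤ 1 + ε} (fun _ => (1:ℝ)) := by
    ext ω; rw [Set.indicator_apply]; rfl
  have hint1 : Integrable (fun ω => if C ω = 1 then (1:ℝ) else 0) (ℙ : Measure Ω) := by
    rw [e1]; exact (integrable_const (1:ℝ)).indicator hsC1
  have hint2 : Integrable (fun ω => if C ω = 0 ∧ R ω * Y₂ ω ≤ 1 + ε then (1:ℝ) else 0)
      (ℙ : Measure Ω) := by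
    rw [e2]; exact (integrable_const (1:ℝ)).indicator hsBig
  rw [integral_add hint1 hint2]
  -- first integral equals p
  have hI1 : ∫ ω, (if C ω = 1 then (1:ℝ) else 0) ∂(ℙ : Measure Ω) = p := by
    rw [e1, integral_indicator_const _ hsC1, measureReal_def, hC1, smul_eq_mul, mul_one,
      ENNReal.toReal_ofReal hp0]
  rw [hI1]
  congr 1
  -- second integral: split as product of independent indicators
  have hfm : ∀ i, Measurable (![C, Y₁, Y₂, R] i) := by
    intro i; fin_cases i <;> simpa
  have hpair : IndepFun (fun ω => (Y₂ ω, R ω)) C (ℙ : Measure Ω) := by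
    have := hindep.indepFun_prodMk hfm 2 3 0 (by decide) (by decide)
    simpa using this
  set φ : ℝ × ℝ → ℝ := fun q => if q.2 * q.1 ≤ 1 + ε then (1:ℝ) else 0 with hφ_def
  have hsφ : MeasurableSet {q : ℝ × ℝ | q.2 * q.1 ≤ 1 + ε} :=
    measurableSet_le (measurable_snd.mul measurable_fst) measurable_const
  have hφm : Measurable φ := Measurable.ite hsφ measurable_const measurable_const
  set ψ : ℝ → ℝ := fun x => if x = 0 then (1:ℝ) else 0 with hψ_def
  have hψm : Measurable ψ := by
    apply Measurable.ite _ measurable_const measurable_const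
    exact MeasurableSet.congr (measurableSet_singleton 0) (by ext x; simp)
  have hWX : IndepFun (fun ω => φ (Y₂ ω, R ω)) (fun ω => ψ (C ω)) (ℙ : Measure Ω) :=
    hpair.comp hφm hψm
  have hprodeq : (fun ω => if C ω = 0 ∧ R ω * Y₂ ω ≤ 1 + ε then (1:ℝ) else 0) =
      fun ω => φ (Y₂ ω, R ω) * ψ (C ω) := by
    ext ω
    simp only [hφ_def, hψ_def]
    by_cases h0 : C ω = 0 <;> by_cases h1 : R ω * Y₂ ω ≤ 1 + ε <;> simp [h0, h1]
  -- integrability of the two factors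
  have hintW : Integrable (fun ω => φ (Y₂ ω, R ω)) (ℙ : Measure Ω) := by
    have : (fun ω => φ (Y₂ ω, R ω)) =
        Set.indicator {ω | R ω * Y₂ ω ≤ 1 + ε} (fun _ => (1:ℝ)) := by
      ext ω; rw [Set.indicator_apply]; rfl
    rw [this]
    exact (integrable_const (1:ℝ)).indicator (measurableSet_le (hRm.mul hY₂m) measurable_const)
  have hintX : Integrable (fun ω => ψ (C ω)) (ℙ : Measure Ω) := by
    have : (fun ω => ψ (C ω)) = Set.indicator {ω | C ω = 0} (fun _ => (1:ℝ)) := by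
      ext ω; rw [Set.indicator_apply]; rfl
    rw [this]
    exact (integrable_const (1:ℝ)).indicator hsC0
  have hsplit : ∫ ω, (if C ω = 0 ∧ R ω * Y₂ ω ≤ 1 + ε then (1:ℝ) else 0) ∂(ℙ : Measure Ω) =
      (∫ ω, φ (Y₂ ω, R ω) ∂(ℙ : Measure Ω)) * ∫ ω, ψ (C ω) ∂(ℙ : Measure Ω) := by
    rw [hprodeq]
    exact hWX.integral_fun_mul_eq_mul_integral hintW.aestronglyMeasurable hintX.aestronglyMeasurable
  have hIX : ∫ ω, ψ (C ω) ∂(ℙ : Measure Ω) = 1 - p := by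
    have : (fun ω => ψ (C ω)) = Set.indicator {ω | C ω = 0} (fun _ => (1:ℝ)) := by
      ext ω; rw [Set.indicator_apply]; rfl
    rw [this, integral_indicator_const _ hsC0, measureReal_def, hC0, smul_eq_mul,
      mul_one, ENNReal.toReal_ofReal (by linarith)]
  -- the main computation for the W factor
  haveI hPY : IsProbabilityMeasure (Measure.map Y₂ (ℙ : Measure Ω)) :=
    Measure.isProbabilityMeasure_map hY₂m.aemeasurable
  haveI hPU : IsProbabilityMeasure (uniformIcc (1 - ε) (1 + ε)) := uniformIcc_isProb _ _ hab
  have hmap : Measure.map (fun ω => (Y₂ ω, R ω)) (ℙ : Measure Ω) =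
      (Measure.map Y₂ (ℙ : Measure Ω)).prod (uniformIcc (1 - ε) (1 + ε)) := by
    have hYR : IndepFun Y₂ R (ℙ : Measure Ω) := by
      have := hindep.indepFun (show (2 : Fin 4) ≠ 3 by decide)
      simpa using this
    rw [← hR]
    exact (indepFun_iff_map_prod_eq_prod_map_map hY₂m.aemeasurable hRm.aemeasurable).1 hYR
  have hyae : ∀ᵐ y ∂(Measure.map Y₂ (ℙ : Measure Ω)), 1 ≤ y :=
    (ae_map_iff hY₂m.aemeasurable (measurableSet_le measurable_const measurable_id)).2
      ((mem_ae_iff_prob_eq_one (measurableSet_le measurable_const hY₂m)).2 hY₂)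
  set g : ℝ → ℝ := fun y => if y ∈ Set.Icc (1:ℝ) ((1 + ε) / (1 - ε)) then
      ((1 + ε) / y - (1 - ε)) / (2 * ε) else 0 with hg_def
  have hgm : Measurable g := by
    apply Measurable.ite _ (((measurable_const.div measurable_id).sub measurable_const).div_const _)
      measurable_const
    exact measurableSet_Icc
  have hφint : Integrable φ
      ((Measure.map Y₂ (ℙ : Measure Ω)).prod (uniformIcc (1 - ε) (1 + ε))) := by
    have : φ = Set.indicator {q : ℝ × ℝ | q.2 * q.1 ≤ 1 + ε} (fun _ => (1:ℝ)) := by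
      ext q; rw [Set.indicator_apply]; rfl
    rw [this]
    exact (integrable_const (1:ℝ)).indicator hsφ
  have hIW : ∫ ω, φ (Y₂ ω, R ω) ∂(ℙ : Measure Ω) = ∫ ω, g (Y₂ ω) ∂(ℙ : Measure Ω) := by
    calc ∫ ω, φ (Y₂ ω, R ω) ∂(ℙ : Measure Ω)
        = ∫ q, φ q ∂(Measure.map (fun ω => (Y₂ ω, R ω)) (ℙ : Measure Ω)) :=
          (integral_map (hY₂m.prodMk hRm).aemeasurable hφm.aestronglyMeasurable).symm
      _ = ∫ q, φ q ∂((Measure.map Y₂ (ℙ : Measure Ω)).prod (uniformIcc (1 - ε) (1 + ε))) := by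
          rw [hmap]
      _ = ∫ y, (∫ r, φ (y, r) ∂(uniformIcc (1 - ε) (1 + ε)))
            ∂(Measure.map Y₂ (ℙ : Measure Ω)) := integral_prod φ hφint
      _ = ∫ y, g y ∂(Measure.map Y₂ (ℙ : Measure Ω)) := by
          apply integral_congr_ae
          filter_upwards [hyae] with y hy
          exact inner_integral ε y ⟨hε0, hε1⟩ hy
      _ = ∫ ω, g (Y₂ ω) ∂(ℙ : Measure Ω) :=
          integral_map hY₂m.aemeasurable hgm.aestronglyMeasurable
  rw [hsplit, hIX, hIW, mul_comm]
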